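/- Let λ₁ > λ₂ ≥ 1 be integers and d = λ₁ + λ₂. Define ring homomorphisms q_λ : ℂ[α₁,…,α_d] → ℂ[ξ,η] by sending α_j to the coefficient of t^{d−j} in the polynomial (t+ξ)^{λ₁}·(t+η)^{λ₂} ∈ ℂ[ξ,η][t], and q_{(d)} : ℂ[α₁,…,α_d] → ℂ[ξ] by α_j ↦ binom(d,j)·ξ^j (the coefficient of t^{d−j} in (t+ξ)^d). Let I_{(d)} = ker q_{(d)}. Then the image q_λ(I_{(d)}) of the ideal I_{(d)} under q_λ equals, as a set, the ideal (ξ−η)²·ℂ[ξ,η] generated by (ξ−η)² in ℂ[ξ,η]. -/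
import Mathlib


open MvPolynomial

/-- The binary form `(t+ξ)^{λ₁}·(t+η)^{λ₂}`, as a polynomial in `t` with coefficients in
`ℂ[ξ,η]`; here `ξ`, `η` are the variables `0`, `1` of `MvPolynomial (Fin 2) ℂ`. -/
noncomputable def paramPoly (lam₁ lam₂ : ℕ) : Polynomial (MvPolynomial (Fin 2) ℂ) :=
  (Polynomial.X + Polynomial.C (MvPolynomial.X 0)) ^ lam₁ *
    (Polynomial.X + Polynomial.C (MvPolynomial.X 1)) ^ lam₂

/-- The coordinate-ring map `q_λ : ℂ[α₁,…,α_d] → ℂ[ξ,η]` of the parametrization of binary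
forms with roots of multiplicities `λ₁`, `λ₂`; the variable `j : Fin d` stands for
`α_{j+1}` and is sent to the coefficient of `t^{d−(j+1)}` in `(t+ξ)^{λ₁}(t+η)^{λ₂}`. -/
noncomputable def qLam (d lam₁ lam₂ : ℕ) :
    MvPolynomial (Fin d) ℂ →ₐ[ℂ] MvPolynomial (Fin 2) ℂ :=
  MvPolynomial.aeval fun j : Fin d => (paramPoly lam₁ lam₂).coeff (d - ((j : ℕ) + 1))

/-- The coordinate-ring map `q_{(d)} : ℂ[α₁,…,α_d] → ℂ[ξ]` of the rational normal curve;
the variable `j : Fin d` stands for `α_{j+1}` and is sent to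
`binom(d,j+1)·ξ^{j+1}`, the coefficient of `t^{d−(j+1)}` in `(t+ξ)^d`. -/
noncomputable def qRNC (d : ℕ) : MvPolynomial (Fin d) ℂ →ₐ[ℂ] Polynomial ℂ :=
  MvPolynomial.aeval fun j : Fin d =>
    Polynomial.C ((d.choose ((j : ℕ) + 1) : ℂ)) * Polynomial.X ^ ((j : ℕ) + 1)



namespace RncAux

theorem coeff_one_add_C_mul_X_pow {R : Type*} [CommRing R] (a : R) (n i : ℕ) :
    ((1 + Polynomial.C a * Polynomial.X : Polynomial R) ^ n).coeff i
      = a ^ i * (n.choose i : R) := by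
  rw [add_comm, add_pow, Polynomial.finset_sum_coeff]
  simp only [one_pow, mul_one, mul_pow, ← Polynomial.C_pow, ← Polynomial.C_eq_natCast,
    Polynomial.coeff_mul_C, Polynomial.coeff_C_mul, Polynomial.coeff_X_pow]
  rw [Finset.sum_eq_single i]
  · simp
  · intro b _ h
    simp [Ne.symm h]
  · intro h
    simp only [Finset.mem_range, not_lt] at h
    rw [Nat.choose_eq_zero_of_lt h]
    simp

theorem reflect_one_X_add_C {R : Type*} [CommRing R] (a : R) :
    Polynomial.reflect 1 (Polynomial.X + Polynomial.C a)
      = 1 + Polynomial.C a * Polynomial.X := by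
  ext i
  simp only [Polynomial.coeff_reflect, Polynomial.coeff_add, Polynomial.coeff_one,
    Polynomial.coeff_C_mul, Polynomial.coeff_X, Polynomial.coeff_C]
  rcases Nat.lt_or_ge 1 i with h | h
  · rw [Polynomial.revAt_eq_self_of_lt h]
    have h0 : i ≠ 0 := by omega
    have h1 : ¬ (i = 1) := by omega
    have h1' : ¬ (1 = i) := by omega
    simp [h0, h1, h1']
  · interval_cases i <;> simp

theorem reflect_pow_X_add_C {R : Type*} [CommRing R] [Nontrivial R] (a : R) (n : ℕ) :
    Polynomial.reflect n ((Polynomial.X + Polynomial.C a) ^ n)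
      = (1 + Polynomial.C a * Polynomial.X) ^ n := by
  induction n with
  | zero => simp
  | succ n ih =>
    rw [pow_succ, pow_succ,
      Polynomial.reflect_mul _ _
        (Polynomial.natDegree_pow_le.trans (by simp [Polynomial.natDegree_X_add_C]))
        (Polynomial.natDegree_X_add_C a).le, ih, reflect_one_X_add_C]

theorem paramPoly_coeff (lam₁ lam₂ d k : ℕ) (hd : d = lam₁ + lam₂) (hk : k ≤ d) :
    (paramPoly lam₁ lam₂).coeff (d - k) =
      ((1 + Polynomial.C (MvPolynomial.X 0) * Polynomial.X) ^ lam₁ *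
        (1 + Polynomial.C (MvPolynomial.X 1) * Polynomial.X) ^ lam₂ :
          Polynomial (MvPolynomial (Fin 2) ℂ)).coeff k := by
  have h1 : Polynomial.reflect d (paramPoly lam₁ lam₂) =
      (1 + Polynomial.C (MvPolynomial.X 0) * Polynomial.X) ^ lam₁ *
        (1 + Polynomial.C (MvPolynomial.X 1) * Polynomial.X) ^ lam₂ := by
    rw [paramPoly, hd,
      Polynomial.reflect_mul _ _
        (Polynomial.natDegree_pow_le.trans (by simp [Polynomial.natDegree_X_add_C]))
        (Polynomial.natDegree_pow_le.trans (by simp [Polynomial.natDegree_X_add_C])),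
      reflect_pow_X_add_C, reflect_pow_X_add_C]
  rw [← h1, Polynomial.coeff_reflect, Polynomial.revAt_le hk]

abbrev B := MvPolynomial (Fin 2) ℂ
noncomputable abbrev xi : B := MvPolynomial.X 0
noncomputable abbrev eta : B := MvPolynomial.X 1
noncomputable abbrev revP (lam₁ lam₂ : ℕ) : Polynomial B :=
  (1 + Polynomial.C xi * Polynomial.X) ^ lam₁ * (1 + Polynomial.C eta * Polynomial.X) ^ lam₂

theorem revP_coeff (lam₁ lam₂ k : ℕ) :
    (revP lam₁ lam₂).coeff k =
      ∑ i ∈ Finset.range (k + 1),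
        xi ^ i * (lam₁.choose i : B) * (eta ^ (k - i) * (lam₂.choose (k - i) : B)) := by
  rw [revP, Polynomial.coeff_mul, Finset.Nat.sum_antidiagonal_eq_sum_range_succ_mk]
  simp only [coeff_one_add_C_mul_X_pow]

theorem revP_coeff_one (lam₁ lam₂ : ℕ) :
    (revP lam₁ lam₂).coeff 1 = (lam₁ : B) * xi + (lam₂ : B) * eta := by
  rw [revP_coeff]
  simp [Finset.sum_range_succ]
  ring

theorem revP_coeff_two (lam₁ lam₂ : ℕ) :
    (revP lam₁ lam₂).coeff 2 =
      (lam₁.choose 2 : B) * xi ^ 2 + (lam₁ : B) * (lam₂ : B) * xi * eta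
        + (lam₂.choose 2 : B) * eta ^ 2 := by
  rw [revP_coeff]
  simp [Finset.sum_range_succ]
  ring

theorem revP_coeff_three (lam₁ lam₂ : ℕ) :
    (revP lam₁ lam₂).coeff 3 =
      (lam₁.choose 3 : B) * xi ^ 3 + (lam₁.choose 2 : B) * (lam₂ : B) * xi ^ 2 * eta
        + (lam₁ : B) * (lam₂.choose 2 : B) * xi * eta ^ 2 + (lam₂.choose 3 : B) * eta ^ 3 := by
  rw [revP_coeff]
  simp [Finset.sum_range_succ]
  ring

theorem choose_two_cast {R : Type*} [CommRing R] (n : ℕ) :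
    ((n.choose 2 : ℕ) : R) * 2 = (n : R) * ((n : R) - 1) := by
  induction n with
  | zero => simp
  | succ n ih =>
    rw [Nat.choose_succ_succ]
    push_cast [Nat.choose_one_right]
    linear_combination ih

theorem choose_three_cast {R : Type*} [CommRing R] (n : ℕ) :
    ((n.choose 3 : ℕ) : R) * 6 = (n : R) * ((n : R) - 1) * ((n : R) - 2) := by
  induction n with
  | zero => simp
  | succ n ih =>
    rw [Nat.choose_succ_succ]
    push_cast
    linear_combination ih + 3 * choose_two_cast (R := R) n

end RncAux

namespace RncAux

theorem mem_of_C_mul {S : Subalgebra ℂ B} {c : ℂ} (hc : c ≠ 0) {x : B}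
    (h : MvPolynomial.C c * x ∈ S) : x ∈ S := by
  have h2 := S.smul_mem h c⁻¹
  rwa [MvPolynomial.smul_eq_C_mul, ← mul_assoc, ← MvPolynomial.C_mul, inv_mul_cancel₀ hc,
    MvPolynomial.C_1, one_mul] at h2

section Main
variable (lam₁ lam₂ d : ℕ) (h₂ : 1 ≤ lam₂) (h₁ : lam₂ < lam₁)

theorem coeff_mem (hd : d = lam₁ + lam₂) (k : ℕ) (hk1 : 1 ≤ k) (hkd : k ≤ d) :
    (revP lam₁ lam₂).coeff k ∈ (qLam d lam₁ lam₂).range := by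
  rw [← paramPoly_coeff lam₁ lam₂ d k hd hkd]
  refine ⟨MvPolynomial.X ⟨k - 1, by omega⟩, ?_⟩
  simp only [qLam, AlgHom.toRingHom_eq_coe, RingHom.coe_coe, MvPolynomial.aeval_X]
  show (paramPoly lam₁ lam₂).coeff (d - (k - 1 + 1)) = (paramPoly lam₁ lam₂).coeff (d - k)
  congr 1
  omega

variable (hd : d = lam₁ + lam₂)
include h₂ h₁ hd

theorem s1_mem : (lam₁ : B) * xi + (lam₂ : B) * eta ∈ (qLam d lam₁ lam₂).range := by
  rw [← revP_coeff_one]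
  exact coeff_mem lam₁ lam₂ d hd 1 le_rfl (by omega)

theorem s2_mem : (lam₁ : B) * xi ^ 2 + (lam₂ : B) * eta ^ 2 ∈ (qLam d lam₁ lam₂).range := by
  have hc1 := coeff_mem lam₁ lam₂ d hd 1 le_rfl (by omega)
  have hc2 := coeff_mem lam₁ lam₂ d hd 2 (by omega) (by omega)
  have key : (lam₁ : B) * xi ^ 2 + (lam₂ : B) * eta ^ 2 =
      (revP lam₁ lam₂).coeff 1 ^ 2 - 2 * (revP lam₁ lam₂).coeff 2 := by
    rw [revP_coeff_one, revP_coeff_two]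
    linear_combination xi ^ 2 * choose_two_cast (R := B) lam₁ +
      eta ^ 2 * choose_two_cast (R := B) lam₂
  rw [key]
  exact sub_mem (pow_mem hc1 2) (mul_mem (Subalgebra.natCast_mem _ 2) hc2)

theorem s3_mem : (lam₁ : B) * xi ^ 3 + (lam₂ : B) * eta ^ 3 ∈ (qLam d lam₁ lam₂).range := by
  have hc1 := coeff_mem lam₁ lam₂ d hd 1 le_rfl (by omega)
  have hc2 := coeff_mem lam₁ lam₂ d hd 2 (by omega) (by omega)
  have hc3 := coeff_mem lam₁ lam₂ d hd 3 (by omega) (by omega)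
  have key : (2 : B) * ((lam₁ : B) * xi ^ 3 + (lam₂ : B) * eta ^ 3) =
      2 * (3 * (revP lam₁ lam₂).coeff 3
        + (revP lam₁ lam₂).coeff 1 * ((revP lam₁ lam₂).coeff 1 ^ 2 - 2 * (revP lam₁ lam₂).coeff 2)
        - (revP lam₁ lam₂).coeff 2 * (revP lam₁ lam₂).coeff 1) := by
    rw [revP_coeff_one, revP_coeff_two, revP_coeff_three]
    linear_combination (3 * (lam₁ : B) * xi ^ 3) * choose_two_cast (R := B) lam₁ +
      (3 * (lam₂ : B) * eta ^ 3) * choose_two_cast (R := B) lam₂ -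
      xi ^ 3 * choose_three_cast (R := B) lam₁ -
      eta ^ 3 * choose_three_cast (R := B) lam₂
  have key2 : (lam₁ : B) * xi ^ 3 + (lam₂ : B) * eta ^ 3 =
      3 * (revP lam₁ lam₂).coeff 3
        + (revP lam₁ lam₂).coeff 1 * ((revP lam₁ lam₂).coeff 1 ^ 2 - 2 * (revP lam₁ lam₂).coeff 2)
        - (revP lam₁ lam₂).coeff 2 * (revP lam₁ lam₂).coeff 1 :=
    mul_left_cancel₀ (two_ne_zero) key
  rw [key2]
  exact sub_mem (add_mem (mul_mem (Subalgebra.natCast_mem _ 3) hc3)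
    (mul_mem hc1 (sub_mem (pow_mem hc1 2) (mul_mem (Subalgebra.natCast_mem _ 2) hc2))))
    (mul_mem hc2 hc1)

end Main
end RncAux


namespace RncAux
section Main2
variable (lam₁ lam₂ d : ℕ) (h₂ : 1 ≤ lam₂) (h₁ : lam₂ < lam₁) (hd : d = lam₁ + lam₂)
include h₂ h₁ hd

theorem u2_mem : (xi - eta) ^ 2 ∈ (qLam d lam₁ lam₂).range := by
  apply mem_of_C_mul (c := (lam₁ : ℂ) * (lam₂ : ℂ))
    (mul_ne_zero (Nat.cast_ne_zero.mpr (by omega)) (Nat.cast_ne_zero.mpr (by omega)))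
  have key : MvPolynomial.C ((lam₁ : ℂ) * (lam₂ : ℂ)) * (xi - eta) ^ 2 =
      ((lam₁ : B) + (lam₂ : B)) * ((lam₁ : B) * xi ^ 2 + (lam₂ : B) * eta ^ 2)
        - ((lam₁ : B) * xi + (lam₂ : B) * eta) ^ 2 := by
    simp only [map_mul, map_natCast]
    ring
  rw [key]
  exact sub_mem
    (mul_mem (add_mem (Subalgebra.natCast_mem _ _) (Subalgebra.natCast_mem _ _))
      (s2_mem lam₁ lam₂ d h₂ h₁ hd))
    (pow_mem (s1_mem lam₁ lam₂ d h₂ h₁ hd) 2)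

theorem u2p1_mem : (xi - eta) ^ 2 * (xi + eta) ∈ (qLam d lam₁ lam₂).range := by
  apply mem_of_C_mul (c := (lam₁ : ℂ) * (lam₂ : ℂ))
    (mul_ne_zero (Nat.cast_ne_zero.mpr (by omega)) (Nat.cast_ne_zero.mpr (by omega)))
  have key : MvPolynomial.C ((lam₁ : ℂ) * (lam₂ : ℂ)) * ((xi - eta) ^ 2 * (xi + eta)) =
      ((lam₁ : B) + (lam₂ : B)) * ((lam₁ : B) * xi ^ 3 + (lam₂ : B) * eta ^ 3)
        - ((lam₁ : B) * xi + (lam₂ : B) * eta)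
          * ((lam₁ : B) * xi ^ 2 + (lam₂ : B) * eta ^ 2) := by
    simp only [map_mul, map_natCast]
    ring
  rw [key]
  exact sub_mem
    (mul_mem (add_mem (Subalgebra.natCast_mem _ _) (Subalgebra.natCast_mem _ _))
      (s3_mem lam₁ lam₂ d h₂ h₁ hd))
    (mul_mem (s1_mem lam₁ lam₂ d h₂ h₁ hd) (s2_mem lam₁ lam₂ d h₂ h₁ hd))

theorem u2xi_mem : (xi - eta) ^ 2 * xi ∈ (qLam d lam₁ lam₂).range := by
  apply mem_of_C_mul (c := (lam₁ : ℂ) - (lam₂ : ℂ))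
    (sub_ne_zero.mpr (by exact_mod_cast h₁.ne'))
  have key : MvPolynomial.C ((lam₁ : ℂ) - (lam₂ : ℂ)) * ((xi - eta) ^ 2 * xi) =
      ((lam₁ : B) * xi + (lam₂ : B) * eta) * (xi - eta) ^ 2
        - (lam₂ : B) * ((xi - eta) ^ 2 * (xi + eta)) := by
    simp only [map_sub, map_natCast]
    ring
  rw [key]
  exact sub_mem (mul_mem (s1_mem lam₁ lam₂ d h₂ h₁ hd) (u2_mem lam₁ lam₂ d h₂ h₁ hd))
    (mul_mem (Subalgebra.natCast_mem _ _) (u2p1_mem lam₁ lam₂ d h₂ h₁ hd))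

theorem u2eta_mem : (xi - eta) ^ 2 * eta ∈ (qLam d lam₁ lam₂).range := by
  apply mem_of_C_mul (c := (lam₁ : ℂ) - (lam₂ : ℂ))
    (sub_ne_zero.mpr (by exact_mod_cast h₁.ne'))
  have key : MvPolynomial.C ((lam₁ : ℂ) - (lam₂ : ℂ)) * ((xi - eta) ^ 2 * eta) =
      (lam₁ : B) * ((xi - eta) ^ 2 * (xi + eta))
        - ((lam₁ : B) * xi + (lam₂ : B) * eta) * (xi - eta) ^ 2 := by
    simp only [map_sub, map_natCast]
    ring
  rw [key]
  exact sub_mem (mul_mem (Subalgebra.natCast_mem _ _) (u2p1_mem lam₁ lam₂ d h₂ h₁ hd))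
    (mul_mem (s1_mem lam₁ lam₂ d h₂ h₁ hd) (u2_mem lam₁ lam₂ d h₂ h₁ hd))

theorem u3_mem : (xi - eta) ^ 3 ∈ (qLam d lam₁ lam₂).range := by
  have key : (xi - eta) ^ 3 = (xi - eta) ^ 2 * xi - (xi - eta) ^ 2 * eta := by ring
  rw [key]
  exact sub_mem (u2xi_mem lam₁ lam₂ d h₂ h₁ hd) (u2eta_mem lam₁ lam₂ d h₂ h₁ hd)

theorem key_mem : ∀ h : B, (xi - eta) ^ 2 * h ∈ (qLam d lam₁ lam₂).range ∧
    (xi - eta) ^ 3 * h ∈ (qLam d lam₁ lam₂).range := by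
  have hdc : (d : ℂ) ≠ 0 := Nat.cast_ne_zero.mpr (by omega)
  intro h
  induction h using MvPolynomial.induction_on with
  | C r =>
    constructor
    · rw [mul_comm, ← MvPolynomial.smul_eq_C_mul]
      exact Subalgebra.smul_mem _ (u2_mem lam₁ lam₂ d h₂ h₁ hd) r
    · rw [mul_comm, ← MvPolynomial.smul_eq_C_mul]
      exact Subalgebra.smul_mem _ (u3_mem lam₁ lam₂ d h₂ h₁ hd) r
  | add p q hp hq =>
    exact ⟨by rw [mul_add]; exact add_mem hp.1 hq.1, by rw [mul_add]; exact add_mem hp.2 hq.2⟩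
  | mul_X p i hp =>
    obtain ⟨hp2, hp3⟩ := hp
    have hu4 : (xi - eta) ^ 2 * ((xi - eta) ^ 2 * p) ∈ (qLam d lam₁ lam₂).range :=
      mul_mem (u2_mem lam₁ lam₂ d h₂ h₁ hd) hp2
    have hs1 := s1_mem lam₁ lam₂ d h₂ h₁ hd
    fin_cases i
    · constructor
      · show (xi - eta) ^ 2 * (p * xi) ∈ (qLam d lam₁ lam₂).range
        apply mem_of_C_mul (c := (d : ℂ)) hdc
        have key : MvPolynomial.C ((d : ℂ)) * ((xi - eta) ^ 2 * (p * xi)) =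
            ((lam₁ : B) * xi + (lam₂ : B) * eta) * ((xi - eta) ^ 2 * p)
              + (lam₂ : B) * ((xi - eta) ^ 3 * p) := by
          subst hd
          simp only [map_natCast]
          push_cast
          ring
        rw [key]
        exact add_mem (mul_mem hs1 hp2) (mul_mem (Subalgebra.natCast_mem _ _) hp3)
      · show (xi - eta) ^ 3 * (p * xi) ∈ (qLam d lam₁ lam₂).range
        apply mem_of_C_mul (c := (d : ℂ)) hdc
        have key : MvPolynomial.C ((d : ℂ)) * ((xi - eta) ^ 3 * (p * xi)) =
            ((lam₁ : B) * xi + (lam₂ : B) * eta) * ((xi - eta) ^ 3 * p)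
              + (lam₂ : B) * ((xi - eta) ^ 2 * ((xi - eta) ^ 2 * p)) := by
          subst hd
          simp only [map_natCast]
          push_cast
          ring
        rw [key]
        exact add_mem (mul_mem hs1 hp3) (mul_mem (Subalgebra.natCast_mem _ _) hu4)
    · constructor
      · show (xi - eta) ^ 2 * (p * eta) ∈ (qLam d lam₁ lam₂).range
        apply mem_of_C_mul (c := (d : ℂ)) hdc
        have key : MvPolynomial.C ((d : ℂ)) * ((xi - eta) ^ 2 * (p * eta)) =
            ((lam₁ : B) * xi + (lam₂ : B) * eta) * ((xi - eta) ^ 2 * p)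
              - (lam₁ : B) * ((xi - eta) ^ 3 * p) := by
          subst hd
          simp only [map_natCast]
          push_cast
          ring
        rw [key]
        exact sub_mem (mul_mem hs1 hp2) (mul_mem (Subalgebra.natCast_mem _ _) hp3)
      · show (xi - eta) ^ 3 * (p * eta) ∈ (qLam d lam₁ lam₂).range
        apply mem_of_C_mul (c := (d : ℂ)) hdc
        have key : MvPolynomial.C ((d : ℂ)) * ((xi - eta) ^ 3 * (p * eta)) =
            ((lam₁ : B) * xi + (lam₂ : B) * eta) * ((xi - eta) ^ 3 * p)
              - (lam₁ : B) * ((xi - eta) ^ 2 * ((xi - eta) ^ 2 * p)) := by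
          subst hd
          simp only [map_natCast]
          push_cast
          ring
        rw [key]
        exact sub_mem (mul_mem hs1 hp3) (mul_mem (Subalgebra.natCast_mem _ _) hu4)

end Main2
end RncAux

namespace RncAux

theorem nilsq_pow {S : Type*} [CommRing S] (y t : S) (ht : t * t = 0) (n : ℕ) :
    (y + t) ^ (n + 1) = y ^ (n + 1) + (n + 1) • (y ^ n * t) := by
  induction n with
  | zero => simp
  | succ n ih =>
    rw [pow_succ, ih]
    simp only [nsmul_eq_mul, Nat.cast_add, Nat.cast_one]
    linear_combination ((n : S) + 1) * y ^ n * ht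

noncomputable def zeta (lam₁ lam₂ d : ℕ) : B :=
  MvPolynomial.C ((lam₁ : ℂ) / (d : ℂ)) * xi + MvPolynomial.C ((lam₂ : ℂ) / (d : ℂ)) * eta

noncomputable def psi (lam₁ lam₂ d : ℕ) : Polynomial ℂ →ₐ[ℂ] B :=
  Polynomial.aeval (zeta lam₁ lam₂ d)

section Main3
variable (lam₁ lam₂ d : ℕ) (h₂ : 1 ≤ lam₂) (h₁ : lam₂ < lam₁) (hd : d = lam₁ + lam₂)
include h₂ h₁ hd

theorem zeta_eq : zeta lam₁ lam₂ d =
    xi - MvPolynomial.C ((lam₂ : ℂ) / (d : ℂ)) * (xi - eta) := by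
  have hdc : (d : ℂ) ≠ 0 := Nat.cast_ne_zero.mpr (by omega)
  have hsc : (lam₁ : ℂ) / (d : ℂ) = 1 - (lam₂ : ℂ) / (d : ℂ) := by
    field_simp
    subst hd
    push_cast
    ring
  rw [zeta, hsc, map_sub, map_one]
  ring

theorem map_paramPoly :
    (paramPoly lam₁ lam₂).map
        (Ideal.Quotient.mk (Ideal.span {(xi - eta) ^ 2} : Ideal B)) =
      (Polynomial.X + Polynomial.C
        (Ideal.Quotient.mk (Ideal.span {(xi - eta) ^ 2} : Ideal B) (zeta lam₁ lam₂ d))) ^ d := by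
  have hzeq := zeta_eq lam₁ lam₂ d h₂ h₁ hd
  have hdc : (d : ℂ) ≠ 0 := Nat.cast_ne_zero.mpr (by omega)
  obtain ⟨m1, rfl⟩ : ∃ m, lam₁ = m + 1 := ⟨lam₁ - 1, by omega⟩
  obtain ⟨m2, rfl⟩ : ∃ m, lam₂ = m + 1 := ⟨lam₂ - 1, by omega⟩
  set I : Ideal B := Ideal.span {(xi - eta) ^ 2} with hI
  set π := Ideal.Quotient.mk I with hπ
  have hw : π (xi - eta) * π (xi - eta) = 0 := by
    rw [← map_mul, ← sq, Ideal.Quotient.eq_zero_iff_mem]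
    exact Ideal.mem_span_singleton_self _
  set Q := B ⧸ I
  set y : Polynomial Q := Polynomial.X + Polynomial.C (π xi) with hy
  set W : Polynomial Q := Polynomial.C (π (xi - eta)) with hW
  have hWW : W * W = 0 := by rw [hW, ← map_mul, hw, map_zero]
  have heta : Polynomial.C (π eta) = Polynomial.C (π xi) - W := by
    rw [hW, ← map_sub, ← map_sub]
    ring_nf
  set c : Polynomial Q := Polynomial.C (π (MvPolynomial.C ((m2 + 1 : ℕ) / (d : ℂ) : ℂ)))
    with hc
  have hzeta : Polynomial.C (π (zeta (m1 + 1) (m2 + 1) d)) =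
      Polynomial.C (π xi) - c * W := by
    rw [hzeq, hc, hW, map_sub, map_mul, map_sub, map_mul]
  rw [paramPoly, Polynomial.map_mul, Polynomial.map_pow, Polynomial.map_pow,
    Polynomial.map_add, Polynomial.map_add, Polynomial.map_X, Polynomial.map_C,
    Polynomial.map_C, hzeta, heta, ← hy]
  have h3 : Polynomial.X + (Polynomial.C (π xi) - W) = y - W := by rw [hy]; ring
  have h4 : Polynomial.X + (Polynomial.C (π xi) - c * W) = y - c * W := by rw [hy]; ring
  rw [h3, h4]
  have e1 : (y - W) ^ (m2 + 1) = y ^ (m2 + 1) + (m2 + 1) • (y ^ m2 * -W) := by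
    rw [sub_eq_add_neg]
    exact nilsq_pow y (-W) (by rw [neg_mul_neg, hWW]) m2
  have e2 : (y - c * W) ^ d = y ^ d + d • (y ^ (d - 1) * -(c * W)) := by
    obtain ⟨e, he⟩ : ∃ e, d = e + 1 := ⟨d - 1, by omega⟩
    rw [he, Nat.add_sub_cancel, sub_eq_add_neg]
    exact nilsq_pow y (-(c * W)) (by
      have h5 : -(c * W) * -(c * W) = c * c * (W * W) := by ring
      rw [h5, hWW, mul_zero]) e
  rw [e1, e2]
  have hcast : ((d : ℕ) : Polynomial Q) * c = ((m2 + 1 : ℕ) : Polynomial Q) := by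
    have hsc : ((d : ℕ) : ℂ) * ((m2 + 1 : ℕ) / (d : ℂ) : ℂ) = ((m2 + 1 : ℕ) : ℂ) := by
      field_simp
    rw [hc]
    rw [show ((d : ℕ) : Polynomial Q) = Polynomial.C (π (MvPolynomial.C ((d : ℕ) : ℂ))) by
      simp, show ((m2 + 1 : ℕ) : Polynomial Q) = Polynomial.C (π (MvPolynomial.C ((m2 + 1 : ℕ) : ℂ))) by
      simp, ← map_mul, ← map_mul, ← map_mul, hsc]
  have hd1 : d - 1 = m1 + m2 + 1 := by omega
  rw [hd1]
  subst hd
  simp only [nsmul_eq_mul]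
  push_cast
  push_cast at hcast
  linear_combination (y ^ (m1 + m2 + 1) * W) * hcast
end Main3
end RncAux


namespace RncAux
section Main4
variable (lam₁ lam₂ d : ℕ) (h₂ : 1 ≤ lam₂) (h₁ : lam₂ < lam₁) (hd : d = lam₁ + lam₂)
include h₂ h₁ hd

theorem qLam_congr (f : MvPolynomial (Fin d) ℂ) :
    qLam d lam₁ lam₂ f - psi lam₁ lam₂ d (qRNC d f) ∈
      (Ideal.span {(xi - eta) ^ 2} : Ideal B) := by
  set I : Ideal B := Ideal.span {(xi - eta) ^ 2} with hI
  have main : (Ideal.Quotient.mkₐ ℂ I).comp (qLam d lam₁ lam₂) =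
      ((Ideal.Quotient.mkₐ ℂ I).comp (psi lam₁ lam₂ d)).comp (qRNC d) := by
    apply MvPolynomial.algHom_ext
    intro j
    have hj : (j : ℕ) + 1 ≤ d := j.2
    simp only [AlgHom.comp_apply, qLam, qRNC, MvPolynomial.aeval_X, map_mul, map_pow, psi,
      Polynomial.aeval_C, Polynomial.aeval_X, Ideal.Quotient.mkₐ_eq_mk]
    rw [show Ideal.Quotient.mk I ((paramPoly lam₁ lam₂).coeff (d - ((j : ℕ) + 1))) =
        ((paramPoly lam₁ lam₂).map (Ideal.Quotient.mk I)).coeff (d - ((j : ℕ) + 1)) from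
      (Polynomial.coeff_map _ _).symm]
    rw [map_paramPoly lam₁ lam₂ d h₂ h₁ hd, Polynomial.coeff_X_add_C_pow,
      show d - (d - ((j : ℕ) + 1)) = (j : ℕ) + 1 by omega, Nat.choose_symm hj]
    simp only [map_natCast]
    ring
  have hmf := DFunLike.congr_fun main f
  simp only [AlgHom.comp_apply, Ideal.Quotient.mkₐ_eq_mk] at hmf
  exact Ideal.Quotient.eq.mp hmf

theorem psi_ker (p : Polynomial ℂ)
    (h : psi lam₁ lam₂ d p ∈ (Ideal.span {(xi - eta) ^ 2} : Ideal B)) : p = 0 := by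
  set δ : B →ₐ[ℂ] Polynomial ℂ := MvPolynomial.aeval ![Polynomial.X, Polynomial.X] with hδ
  have hcomp : δ.comp (psi lam₁ lam₂ d) = AlgHom.id ℂ (Polynomial ℂ) := by
    apply Polynomial.algHom_ext
    simp only [AlgHom.comp_apply, psi, Polynomial.aeval_X, AlgHom.id_apply, hδ, zeta]
    rw [map_add, map_mul, map_mul, MvPolynomial.aeval_C, MvPolynomial.aeval_C,
      MvPolynomial.aeval_X, MvPolynomial.aeval_X]
    have hsum : ((lam₁ : ℂ) / (d : ℂ)) + ((lam₂ : ℂ) / (d : ℂ)) = 1 := by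
      have hdc : (d : ℂ) ≠ 0 := Nat.cast_ne_zero.mpr (by omega)
      field_simp
      subst hd
      push_cast
      ring
    have hC : (Polynomial.C ((lam₁ : ℂ) / (d : ℂ)) + Polynomial.C ((lam₂ : ℂ) / (d : ℂ)) :
        Polynomial ℂ) = 1 := by
      rw [← map_add, hsum, map_one]
    have h0 : (![Polynomial.X, Polynomial.X] : Fin 2 → Polynomial ℂ) 0 = Polynomial.X := rfl
    have h1 : (![Polynomial.X, Polynomial.X] : Fin 2 → Polynomial ℂ) 1 = Polynomial.X := rfl
    rw [show algebraMap ℂ (Polynomial ℂ) ((lam₁ : ℂ) / (d : ℂ)) =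
      Polynomial.C ((lam₁ : ℂ) / (d : ℂ)) from rfl]
    rw [show algebraMap ℂ (Polynomial ℂ) ((lam₂ : ℂ) / (d : ℂ)) =
      Polynomial.C ((lam₂ : ℂ) / (d : ℂ)) from rfl]
    rw [h0, h1]
    linear_combination Polynomial.X * hC
  obtain ⟨g, hg⟩ := Ideal.mem_span_singleton'.mp h
  have hp : p = δ (psi lam₁ lam₂ d p) := (DFunLike.congr_fun hcomp p).symm
  rw [hp, ← hg, map_mul, map_pow, map_sub]
  have h0 : δ xi = Polynomial.X := by
    rw [hδ]
    rw [MvPolynomial.aeval_X]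
    rfl
  have h1 : δ eta = Polynomial.X := by
    rw [hδ]
    rw [MvPolynomial.aeval_X]
    rfl
  rw [h0, h1]
  simp

end Main4
end RncAux

/-- For `λ = (λ₁,λ₂)` with `λ₁ > λ₂ ≥ 1` and `d = λ₁+λ₂`, the image under `q_λ` of the
ideal `I_{(d)} = ker q_{(d)}` is exactly the ideal generated by `(ξ−η)²`. -/
theorem image_of_rnc_ideal (lam₁ lam₂ d : ℕ) (h₂ : 1 ≤ lam₂) (h₁ : lam₂ < lam₁)
    (hd : d = lam₁ + lam₂) :
    (qLam d lam₁ lam₂) '' (RingHom.ker (qRNC d) : Set (MvPolynomial (Fin d) ℂ)) =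
      (Ideal.span {(MvPolynomial.X 0 - MvPolynomial.X 1 : MvPolynomial (Fin 2) ℂ) ^ 2} :
        Ideal (MvPolynomial (Fin 2) ℂ)) := by
  classical
  ext g
  simp only [Set.mem_image, SetLike.mem_coe, RingHom.mem_ker]
  constructor
  · rintro ⟨f, hf, rfl⟩
    have hc := RncAux.qLam_congr lam₁ lam₂ d h₂ h₁ hd f
    rw [hf, map_zero, sub_zero] at hc
    exact hc
  · intro hg
    obtain ⟨h, hh⟩ := Ideal.mem_span_singleton'.mp hg
    obtain ⟨f, hf⟩ := (RncAux.key_mem lam₁ lam₂ d h₂ h₁ hd h).1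
    simp only [AlgHom.toRingHom_eq_coe, RingHom.coe_coe] at hf
    have hker : qRNC d f = 0 := by
      apply RncAux.psi_ker lam₁ lam₂ d h₂ h₁ hd
      have h1 := RncAux.qLam_congr lam₁ lam₂ d h₂ h₁ hd f
      have h2 : qLam d lam₁ lam₂ f ∈
          (Ideal.span {(RncAux.xi - RncAux.eta) ^ 2} : Ideal RncAux.B) := by
        rw [hf]
        exact Ideal.mul_mem_right _ _ (Ideal.mem_span_singleton_self _)
      have h3 := sub_mem h2 h1
      simpa using h3
    refine ⟨f, hker, ?_⟩
    rw [hf, ← hh]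
    ring
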